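/- Let L ∈ ℕ with L ≥ 1. For i = 0, …, L and t ∈ ℝ, define γ_i(t) ∈ ℝ^L componentwise by (γ_i(t))_ℓ = ((ℓ−1)! / (i+ℓ−1)!) · t^{i+ℓ−1} for ℓ = 1, …, L, and define the matrix Γ(t) ∈ ℝ^{L×L} whose i-th row is γ_i(t)^⊤ for i = 1, …, L. Then Γ(t) is invertible for every t > 0. -/

import Mathlib

open Matrix

/-- The polynomial vector `γ_i(t) ∈ ℝ^L`: its `ℓ`-th component (`ℓ` 0-based, so the
paper's index is `ℓ+1`) is `(ℓ! / (i+ℓ)!) · t^{i+ℓ}`. -/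
noncomputable def gammaVec (L i : ℕ) (t : ℝ) : Fin L → ℝ :=
  fun ℓ => ((ℓ : ℕ).factorial : ℝ) / ((i + (ℓ : ℕ)).factorial : ℝ) * t ^ (i + (ℓ : ℕ))

/-- `Γ(t) = [γ_1(t) ⋯ γ_L(t)]ᵀ ∈ ℝ^{L×L}`: the `i`-th row (0-based) is `γ_{i+1}(t)ᵀ`. -/
noncomputable def GammaMat (L : ℕ) (t : ℝ) : Matrix (Fin L) (Fin L) ℝ :=
  Matrix.of fun i ℓ => gammaVec L ((i : ℕ) + 1) t ℓ

open Polynomial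

/-- Auxiliary family of polynomials: `P_k = ∑_i c_i / (i+1+k)! X^(i+1+k)`. -/
noncomputable def auxP (L : ℕ) (c : Fin L → ℝ) (k : ℕ) : ℝ[X] :=
  ∑ i : Fin L, C (c i / (((i : ℕ) + 1 + k).factorial : ℝ)) * X ^ ((i : ℕ) + 1 + k)

lemma auxP_derivative (L : ℕ) (c : Fin L → ℝ) (k : ℕ) :
    derivative (auxP L c (k + 1)) = auxP L c k := by
  unfold auxP
  rw [derivative_sum]
  refine Finset.sum_congr rfl fun i _ => ?_
  rw [derivative_C_mul_X_pow]
  have h1 : (i : ℕ) + 1 + (k + 1) - 1 = (i : ℕ) + 1 + k := by omega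
  have h2 : (i : ℕ) + 1 + (k + 1) = ((i : ℕ) + 1 + k) + 1 := by omega
  rw [h1, h2, Nat.factorial_succ]
  congr 1
  have hfac : (((((i : ℕ) + 1 + k).factorial : ℕ) : ℝ)) ≠ 0 := by
    exact_mod_cast Nat.factorial_ne_zero _
  have hnz : ((((i : ℕ) + 1 + k) + 1 : ℕ) : ℝ) ≠ 0 := by positivity
  push_cast
  field_simp

lemma auxP_iterate (L : ℕ) (c : Fin L → ℝ) (j k : ℕ) :
    derivative^[j] (auxP L c (k + j)) = auxP L c k := by
  induction j with
  | zero => simp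
  | succ n ih =>
    rw [show k + (n + 1) = (k + n) + 1 by omega, Function.iterate_succ_apply,
      auxP_derivative, ih]

theorem stmt_2 (L : ℕ) (hL : 1 ≤ L) (t : ℝ) (ht : 0 < t) :
    IsUnit (GammaMat L t) := by
  rw [Matrix.isUnit_iff_isUnit_det, isUnit_iff_ne_zero]
  intro hdet
  obtain ⟨v, hv0, hv⟩ := (Matrix.exists_vecMul_eq_zero_iff).mpr hdet
  -- each auxP L v ℓ vanishes at t
  have heval : ∀ ℓ : Fin L, (auxP L v (ℓ : ℕ)).eval t = 0 := by
    intro ℓ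
    have h := congrFun hv ℓ
    simp only [Matrix.vecMul, dotProduct, GammaMat, gammaVec, Matrix.of_apply,
      Pi.zero_apply] at h
    have hfac : (((ℓ : ℕ).factorial : ℝ)) ≠ 0 := by
      exact_mod_cast Nat.factorial_ne_zero _
    have : ((ℓ : ℕ).factorial : ℝ) * (auxP L v (ℓ : ℕ)).eval t = 0 := by
      rw [auxP, eval_finset_sum, Finset.mul_sum, ← h]
      refine Finset.sum_congr rfl fun i _ => ?_
      simp only [eval_mul, eval_C, eval_pow, eval_X]
      field_simp
    exact (mul_eq_zero.mp this).resolve_left hfac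
  set P : ℝ[X] := auxP L v (L - 1) with hP
  by_cases hPz : P = 0
  · -- then all coefficients vanish, so v = 0, contradiction
    apply hv0
    funext j
    have hc := congrArg (fun p => Polynomial.coeff p ((j : ℕ) + 1 + (L - 1))) hPz
    simp only [hP, auxP, Polynomial.finset_sum_coeff, coeff_C_mul, coeff_X_pow,
      coeff_zero] at hc
    rw [Finset.sum_eq_single j] at hc
    · simp only [if_pos rfl, if_true, mul_one] at hc
      have hfac : ((((j : ℕ) + 1 + (L - 1)).factorial : ℕ) : ℝ) ≠ 0 := by
        exact_mod_cast Nat.factorial_ne_zero _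
      have := div_eq_zero_iff.mp hc
      simpa [hfac] using this
    · intro i _ hij
      have : ¬ ((j : ℕ) + 1 + (L - 1) = (i : ℕ) + 1 + (L - 1)) := by
        intro h; exact hij (by ext; omega)
      have h2 : ¬ ((j : ℕ) = (i : ℕ)) := fun h => hij (Fin.ext h.symm)
      simp [this, h2]
    · intro h; exact absurd (Finset.mem_univ j) h
  · -- P ≠ 0 : multiplicity argument
    have hroot : ∀ m ≤ L - 1, (derivative^[m] P).IsRoot t := by
      intro m hm
      have hkey : derivative^[m] P = auxP L v (L - 1 - m) := by
        have h := auxP_iterate L v m (L - 1 - m)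
        rwa [show L - 1 - m + m = L - 1 by omega, ← hP] at h
      rw [hkey]
      exact heval ⟨L - 1 - m, by omega⟩
    have hlt : L - 1 < P.rootMultiplicity t :=
      Polynomial.lt_rootMultiplicity_of_isRoot_iterate_derivative_of_mem_nonZeroDivisors'
        hPz hroot (fun m _ hm => by
          refine mem_nonZeroDivisors_of_ne_zero ?_
          exact_mod_cast hm)
    have hdvd1 : (X - C t) ^ L ∣ P :=
      (pow_dvd_pow _ (by omega)).trans (P.pow_rootMultiplicity_dvd t)
    have hdvd2 : (X : ℝ[X]) ^ L ∣ P := by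
      rw [hP, auxP]
      refine Finset.dvd_sum fun i _ => ?_
      exact Dvd.dvd.mul_left (pow_dvd_pow X (by omega)) _
    have hcop : IsCoprime ((X : ℝ[X]) ^ L) ((X - C t) ^ L) := by
      have : IsCoprime ((X : ℝ[X]) - C 0) (X - C t) :=
        Polynomial.isCoprime_X_sub_C_of_isUnit_sub (by
          simpa using (isUnit_iff_ne_zero.mpr (neg_ne_zero.mpr ht.ne')))
      simpa using this.pow
    have hdvd : (X : ℝ[X]) ^ L * (X - C t) ^ L ∣ P := hcop.mul_dvd hdvd2 hdvd1
    have hdegP : P.natDegree ≤ 2 * L - 1 := by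
      rw [hP, auxP]
      refine Polynomial.natDegree_sum_le_of_forall_le _ _ fun i _ => ?_
      exact (Polynomial.natDegree_C_mul_le _ _).trans (by
        rw [Polynomial.natDegree_X_pow]; omega)
    have hdeg2 : 2 * L ≤ P.natDegree := by
      have := Polynomial.natDegree_le_of_dvd hdvd hPz
      have hmul : ((X : ℝ[X]) ^ L * (X - C t) ^ L).natDegree = 2 * L := by
        rw [Polynomial.natDegree_mul (pow_ne_zero _ Polynomial.X_ne_zero)
          (pow_ne_zero _ (Polynomial.X_sub_C_ne_zero t)),
          Polynomial.natDegree_X_pow, Polynomial.natDegree_pow,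
          Polynomial.natDegree_X_sub_C]
        ring
      omega
    omega
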